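/- The polynomial x⁴ − x³ − x² − x + 1 has a real root λ > 1 and a complex root on the unit circle; i.e., its largest real root has a Galois conjugate of absolute value 1. -/

import Mathlib

theorem stmt13 :
    (∃ lam : ℝ, 1 < lam ∧ lam ^ 4 - lam ^ 3 - lam ^ 2 - lam + 1 = 0) ∧
    (∃ μ : ℂ, ‖μ‖ = 1 ∧ μ ^ 4 - μ ^ 3 - μ ^ 2 - μ + 1 = 0) := by
  constructor
  · -- real root via IVT on [1,2]
    set f : ℝ → ℝ := fun x => x ^ 4 - x ^ 3 - x ^ 2 - x + 1 with hf
    have hcont : ContinuousOn f (Set.Icc (1:ℝ) 2) := by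
      apply Continuous.continuousOn; continuity
    have h1 : f 1 = -1 := by norm_num [hf]
    have h2 : f 2 = 3 := by norm_num [hf]
    have := intermediate_value_Ioo (by norm_num : (1:ℝ) ≤ 2) hcont
    have h0 : (0:ℝ) ∈ f '' Set.Ioo 1 2 := this (by rw [h1, h2]; constructor <;> norm_num)
    obtain ⟨x, hx, hfx⟩ := h0
    exact ⟨x, hx.1, hfx⟩
  · -- complex root on unit circle
    have h13 : (Real.sqrt 13) ^ 2 = 13 := Real.sq_sqrt (by norm_num)
    have h13lb : (3:ℝ) ≤ Real.sqrt 13 := by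
      nlinarith [Real.sqrt_nonneg 13]
    have h13ub : Real.sqrt 13 ≤ 4 := by
      nlinarith [Real.sqrt_nonneg 13]
    set c : ℝ := (1 - Real.sqrt 13) / 4 with hc
    have hc2 : c ^ 2 ≤ 1 := by
      rw [hc]; nlinarith
    set s : ℝ := Real.sqrt (1 - c ^ 2) with hs
    have hs2 : s ^ 2 = 1 - c ^ 2 := Real.sq_sqrt (by linarith)
    refine ⟨⟨c, s⟩, ?_, ?_⟩
    · rw [Complex.norm_def, Complex.normSq_mk]
      rw [show c * c + s * s = c ^ 2 + s ^ 2 by ring, hs2]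
      norm_num
    · set μ : ℂ := ⟨c, s⟩ with hμ
      have key : μ ^ 2 - (2 * c : ℝ) * μ + 1 = 0 := by
        apply Complex.ext <;>
          simp [hμ, pow_two, Complex.mul_re, Complex.mul_im, Complex.ofReal_re,
            Complex.ofReal_im] <;> nlinarith [hs2]
      have hb : μ ^ 4 - μ ^ 3 - μ ^ 2 - μ + 1 =
          (μ ^ 2 - (2 * c : ℝ) * μ + 1) * (μ ^ 2 - ((1 : ℂ) - (2 * c : ℝ)) * μ + 1) := by
        have hcc : ((2 * c : ℝ) : ℂ) * ((1 : ℂ) - ((2 * c : ℝ) : ℂ)) = -3 := by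
          have : ((2 * c : ℝ) : ℂ) = 2 * (c : ℝ) := by push_cast; ring
          rw [this]
          have h13c : ((Real.sqrt 13 : ℝ) : ℂ) ^ 2 = 13 := by
            rw [← Complex.ofReal_pow, h13]; norm_num
          rw [hc]; push_cast; linear_combination (-1/4 : ℂ) * h13c
        linear_combination -(μ ^ 2) * hcc
      rw [hb, key, zero_mul]
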